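/- For each n ∈ ℕ, let g(n) be the number of subsets X ⊆ Fin n × Fin n whose coordinate projections are both surjective and for which the kernel congruences of the projections of ⟨X⟩ ≤ (Fin n)⁺ × (Fin n)⁺ commute, and let f(n) be the number of subsets X ⊆ Fin n × Fin n whose coordinate projections are both surjective. Then g(n) / f(n) tends to 0 as n → ∞. -/
import Mathlib

/-- The embedding of a pair of letters into the product of free semigroups. -/
def embedPair {A B : Type*} (p : A × B) : FreeSemigroup A × FreeSemigroup B :=
  (FreeSemigroup.of p.1, FreeSemigroup.of p.2)

/-- The subsemigroup `⟨X⟩` of `A⁺ × B⁺` generated by a set `X ⊆ A × B` of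
pairs of letters. -/
def genSubsemigroup {A B : Type*} (X : Set (A × B)) :
    Subsemigroup (FreeSemigroup A × FreeSemigroup B) :=
  Subsemigroup.closure (embedPair '' X)

/-- The kernel congruence of the projection of `⟨X⟩` onto `A⁺`, as a relation. -/
def kerFst {A B : Type*} (X : Set (A × B)) (u v : genSubsemigroup X) : Prop :=
  (u : FreeSemigroup A × FreeSemigroup B).1 = (v : FreeSemigroup A × FreeSemigroup B).1

/-- The kernel congruence of the projection of `⟨X⟩` onto `B⁺`, as a relation. -/
def kerSnd {A B : Type*} (X : Set (A × B)) (u v : genSubsemigroup X) : Prop :=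
  (u : FreeSemigroup A × FreeSemigroup B).2 = (v : FreeSemigroup A × FreeSemigroup B).2

/-- `f n`: the number of subsets `X ⊆ Fin n × Fin n` whose coordinate
projections are both surjective. -/
noncomputable def subdirectCount (n : ℕ) : ℕ :=
  Nat.card {X : Set (Fin n × Fin n) //
    (∀ a : Fin n, ∃ b : Fin n, (a, b) ∈ X) ∧ (∀ b : Fin n, ∃ a : Fin n, (a, b) ∈ X)}

/-- `g n`: the number of subsets `X ⊆ Fin n × Fin n` whose coordinate
projections are both surjective and whose kernel congruences on
`⟨X⟩ ≤ (Fin n)⁺ × (Fin n)⁺` commute. -/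
noncomputable def fiberCount (n : ℕ) : ℕ :=
  Nat.card {X : Set (Fin n × Fin n) //
    ((∀ a : Fin n, ∃ b : Fin n, (a, b) ∈ X) ∧ (∀ b : Fin n, ∃ a : Fin n, (a, b) ∈ X)) ∧
    Relation.Comp (kerFst X) (kerSnd X) = Relation.Comp (kerSnd X) (kerFst X)}

lemma mem_image_of_mem_closure {A B : Type*} {X : Set (A × B)}
    {w : FreeSemigroup A × FreeSemigroup B} (hw : w ∈ genSubsemigroup X)
    (h1 : w.1.length = 1) : w ∈ embedPair '' X := by
  refine Subsemigroup.closure_induction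
    (p := fun x _ => x.1.length = 1 → x ∈ embedPair '' X)
    (fun x hx _ => hx) (fun x y _ _ _ _ hxy => ?_) hw h1
  exfalso
  rw [Prod.fst_mul, FreeSemigroup.length_mul] at hxy
  have hx1 : x.1.length = x.1.tail.length + 1 := rfl
  have hy1 : y.1.length = y.1.tail.length + 1 := rfl
  omega

lemma difunctional_of_commute {A B : Type*} {X : Set (A × B)}
    (h : Relation.Comp (kerFst X) (kerSnd X) = Relation.Comp (kerSnd X) (kerFst X))
    {a a' : A} {b b' : B} (h1 : (a, b) ∈ X) (h2 : (a, b') ∈ X) (h3 : (a', b') ∈ X) :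
    (a', b) ∈ X := by
  have hu : embedPair (a, b) ∈ genSubsemigroup X :=
    Subsemigroup.subset_closure ⟨_, h1, rfl⟩
  have hv : embedPair (a', b') ∈ genSubsemigroup X :=
    Subsemigroup.subset_closure ⟨_, h3, rfl⟩
  have hw : embedPair (a, b') ∈ genSubsemigroup X :=
    Subsemigroup.subset_closure ⟨_, h2, rfl⟩
  have hcomp : Relation.Comp (kerFst X) (kerSnd X) ⟨_, hu⟩ ⟨_, hv⟩ :=
    ⟨⟨_, hw⟩, rfl, rfl⟩
  rw [h] at hcomp
  obtain ⟨⟨w, hwmem⟩, hw2, hw1⟩ := hcomp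
  have hw1' : w.1 = FreeSemigroup.of a' := hw1
  have hw2' : FreeSemigroup.of b = w.2 := hw2
  have hwim : w ∈ embedPair '' X := by
    apply mem_image_of_mem_closure hwmem
    rw [hw1', FreeSemigroup.length_of]
  obtain ⟨⟨x, y⟩, hxy, hwe⟩ := hwim
  have e1 : FreeSemigroup.of x = FreeSemigroup.of a' := by rw [← hw1', ← hwe]; rfl
  have e2 : FreeSemigroup.of y = FreeSemigroup.of b := by rw [hw2', ← hwe]; rfl
  have hx : x = a' := congrArg FreeSemigroup.head e1
  have hy : y = b := congrArg FreeSemigroup.head e2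
  rw [hx, hy] at hxy
  exact hxy

lemma min'_congr {α : Type*} [LinearOrder α] {s t : Finset α} (h : s = t)
    (hs : s.Nonempty) (ht : t.Nonempty) : s.min' hs = t.min' ht := by
  subst h; rfl

lemma fiberCount_le (n : ℕ) : fiberCount n ≤ n ^ n * n ^ n := by
  classical
  rw [fiberCount]
  set T := {X : Set (Fin n × Fin n) //
    ((∀ a : Fin n, ∃ b : Fin n, (a, b) ∈ X) ∧ (∀ b : Fin n, ∃ a : Fin n, (a, b) ∈ X)) ∧
    Relation.Comp (kerFst X) (kerSnd X) = Relation.Comp (kerSnd X) (kerFst X)} with hT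
  have hne1 : ∀ (X : T) (a : Fin n), (Finset.univ.filter fun b => (a, b) ∈ X.1).Nonempty := by
    intro X a
    obtain ⟨b, hb⟩ := X.2.1.1 a
    exact ⟨b, by simp [hb]⟩
  have hne2 : ∀ (X : T) (b : Fin n), (Finset.univ.filter fun a => (a, b) ∈ X.1).Nonempty := by
    intro X b
    obtain ⟨a, ha⟩ := X.2.1.2 b
    exact ⟨a, by simp [ha]⟩
  let r : T → Fin n → Fin n := fun X a => (Finset.univ.filter fun b => (a, b) ∈ X.1).min' (hne1 X a)
  let s : T → Fin n → Fin n := fun X b => (Finset.univ.filter fun a => (a, b) ∈ X.1).min' (hne2 X b)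
  have hrmem : ∀ (X : T) (a : Fin n), (a, r X a) ∈ X.1 := by
    intro X a
    have := Finset.min'_mem _ (hne1 X a)
    simpa using this
  have hsmem : ∀ (X : T) (b : Fin n), (s X b, b) ∈ X.1 := by
    intro X b
    have := Finset.min'_mem _ (hne2 X b)
    simpa using this
  have hD : ∀ (X : T) (a a' b b' : Fin n),
      (a, b) ∈ X.1 → (a, b') ∈ X.1 → (a', b') ∈ X.1 → (a', b) ∈ X.1 :=
    fun X a a' b b' h1 h2 h3 => difunctional_of_commute X.2.2 h1 h2 h3
  have key : ∀ (X : T) (a b : Fin n), ((a, b) ∈ X.1 ↔ r X (s X b) = r X a) := by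
    intro X a b
    constructor
    · intro hab
      have hsb : (s X b, b) ∈ X.1 := hsmem X b
      refine min'_congr ?_ _ _
      ext b'
      simp only [Finset.mem_filter, Finset.mem_univ, true_and]
      constructor
      · intro h'
        exact hD X _ _ _ _ h' hsb hab
      · intro h'
        exact hD X _ _ _ _ h' hab hsb
    · intro hre
      have h1 : (a, r X a) ∈ X.1 := hrmem X a
      have h2 : (s X b, r X (s X b)) ∈ X.1 := hrmem X (s X b)
      rw [hre] at h2
      exact hD X _ _ _ _ (hsmem X b) h2 h1
  have hinj : Function.Injective (fun X : T => (r X, s X)) := by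
    intro X Y hXY
    have hr : r X = r Y := congrArg Prod.fst hXY
    have hs : s X = s Y := congrArg Prod.snd hXY
    apply Subtype.ext
    ext ⟨a, b⟩
    rw [show ((a, b) ∈ X.1 ↔ r X (s X b) = r X a) from key X a b,
        show ((a, b) ∈ Y.1 ↔ r Y (s Y b) = r Y a) from key Y a b, hr, hs]
  calc Nat.card T ≤ Nat.card ((Fin n → Fin n) × (Fin n → Fin n)) :=
        Nat.card_le_card_of_injective _ hinj
    _ = n ^ n * n ^ n := by
        simp [Nat.card_eq_fintype_card, Fintype.card_fun]

lemma le_subdirectCount (n : ℕ) : 2 ^ (n * (n - 1)) ≤ subdirectCount n := by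
  classical
  rw [subdirectCount]
  let G : Set {p : Fin n × Fin n // p.1 ≠ p.2} →
      {X : Set (Fin n × Fin n) //
        (∀ a : Fin n, ∃ b : Fin n, (a, b) ∈ X) ∧ (∀ b : Fin n, ∃ a : Fin n, (a, b) ∈ X)} :=
    fun Y => ⟨{p | p.1 = p.2 ∨ ∃ h : p.1 ≠ p.2, (⟨p, h⟩ : {p : Fin n × Fin n // p.1 ≠ p.2}) ∈ Y},
      ⟨fun a => ⟨a, Or.inl rfl⟩, fun b => ⟨b, Or.inl rfl⟩⟩⟩
  have hinj : Function.Injective G := by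
    intro Y Z hYZ
    have hYZ' : (G Y).1 = (G Z).1 := congrArg Subtype.val hYZ
    ext ⟨p, hp⟩
    have hmem : ∀ (W : Set {p : Fin n × Fin n // p.1 ≠ p.2}),
        (⟨p, hp⟩ : {p : Fin n × Fin n // p.1 ≠ p.2}) ∈ W ↔ p ∈ (G W).1 := by
      intro W
      constructor
      · intro h
        exact Or.inr ⟨hp, h⟩
      · intro h
        rcases h with h | ⟨h', h⟩
        · exact absurd h hp
        · exact h
    rw [hmem Y, hmem Z, hYZ']
  have hcard : Fintype.card {p : Fin n × Fin n // p.1 = p.2} = n := by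
    have e : {p : Fin n × Fin n // p.1 = p.2} ≃ Fin n :=
      { toFun := fun q => q.1.1
        invFun := fun a => ⟨(a, a), rfl⟩
        left_inv := fun q => by
          obtain ⟨⟨x, y⟩, h⟩ := q
          cases h
          rfl
        right_inv := fun a => rfl }
    rw [Fintype.card_congr e, Fintype.card_fin]
  have hcard2 : Fintype.card {p : Fin n × Fin n // p.1 ≠ p.2} = n * (n - 1) := by
    have h := Fintype.card_subtype_compl (fun p : Fin n × Fin n => p.1 = p.2)
    simp only [Fintype.card_prod, Fintype.card_fin, hcard] at h
    have e2 : {p : Fin n × Fin n // p.1 ≠ p.2} ≃ {x : Fin n × Fin n // ¬x.1 = x.2} :=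
      Equiv.subtypeEquivRight (fun p => Iff.rfl)
    rw [Fintype.card_congr e2, h]
    cases n with
    | zero => simp
    | succ m => rw [Nat.succ_sub_one, Nat.mul_succ, Nat.add_sub_cancel]
  calc 2 ^ (n * (n - 1))
      = Nat.card (Set {p : Fin n × Fin n // p.1 ≠ p.2}) := by
        rw [Nat.card_eq_fintype_card, Fintype.card_set, hcard2]
    _ ≤ _ := Nat.card_le_card_of_injective _ hinj

lemma sq_le_two_pow {n : ℕ} (hn : 10 ≤ n) : n * n ≤ 2 ^ (n - 2) := by
  induction n, hn using Nat.le_induction with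
  | base => norm_num
  | succ n hn ih =>
    have h1 : (n + 1) * (n + 1) ≤ 2 * (n * n) := by nlinarith
    have h2 : 2 * (n * n) ≤ 2 * 2 ^ (n - 2) := by omega
    have h3 : 2 * 2 ^ (n - 2) = 2 ^ (n + 1 - 2) := by
      rw [← pow_succ']
      congr 1
      omega
    omega

lemma key_ineq {n : ℕ} (hn : 10 ≤ n) : fiberCount n * 2 ^ n ≤ subdirectCount n := by
  have h1 : fiberCount n ≤ (n * n) ^ n := by
    calc fiberCount n ≤ n ^ n * n ^ n := fiberCount_le n
      _ = (n * n) ^ n := (mul_pow n n n).symm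
  have h2 : (n * n) ^ n ≤ (2 ^ (n - 2)) ^ n := Nat.pow_le_pow_left (sq_le_two_pow hn) n
  have h3 : (2 ^ (n - 2)) ^ n * 2 ^ n = 2 ^ (n * (n - 1)) := by
    rw [← pow_mul, ← pow_add]
    congr 1
    have h4 : n - 1 = (n - 2) + 1 := by omega
    rw [h4, Nat.mul_succ, Nat.mul_comm n (n - 2)]
  calc fiberCount n * 2 ^ n ≤ (2 ^ (n - 2)) ^ n * 2 ^ n :=
        Nat.mul_le_mul_right _ (le_trans h1 h2)
    _ = 2 ^ (n * (n - 1)) := h3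
    _ ≤ subdirectCount n := le_subdirectCount n

/-- `g(n) / f(n) → 0` as `n → ∞`. -/
theorem stmt17 :
    Filter.Tendsto (fun n : ℕ => (fiberCount n : ℝ) / (subdirectCount n : ℝ))
      Filter.atTop (nhds 0) := by
  have hpos : ∀ n : ℕ, 0 < subdirectCount n := fun n =>
    lt_of_lt_of_le (by positivity) (le_subdirectCount n)
  apply squeeze_zero' (g := fun n : ℕ => (1 / 2 : ℝ) ^ n)
  · filter_upwards with n
    positivity
  · filter_upwards [Filter.eventually_ge_atTop 10] with n hn
    have hf : (0 : ℝ) < subdirectCount n := by exact_mod_cast hpos n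
    have h2 : (fiberCount n : ℝ) * 2 ^ n ≤ subdirectCount n := by
      exact_mod_cast key_ineq hn
    rw [div_le_iff₀ hf]
    have hp : (0 : ℝ) < 2 ^ n := by positivity
    calc (fiberCount n : ℝ) = (fiberCount n : ℝ) * 2 ^ n / 2 ^ n := by field_simp
      _ ≤ (subdirectCount n : ℝ) / 2 ^ n := by gcongr
      _ = (1 / 2 : ℝ) ^ n * subdirectCount n := by
          rw [div_pow, one_pow]
          field_simp
  · exact tendsto_pow_atTop_nhds_zero_of_lt_one (by norm_num) (by norm_num)
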